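/- Let X be a Banach space and T : X → X a bounded linear operator such that there exists a dense set D ⊆ X with lim_{n→∞} T^n x = 0 for all x ∈ D. The following are equivalent: (i) T satisfies the Distributional Chaos Criterion; (ii) T admits a distributionally irregular vector; (iii) there exist a sequence (y_m) in X \ {0} and a sequence of positive integers (N_m) increasing to ∞ such that lim_m (1/N_m)·card{0 ≤ i < N_m : ‖T^i y_m‖ ≥ m‖y_m‖} = 1. -/

import Mathlib

open Filter Topology
open scoped ENNReal

section Defs

variable {𝕜 : Type*} [RCLike 𝕜] {X : Type*} [NormedAddCommGroup X] [NormedSpace 𝕜 X]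

/-- The upper density of a set of natural numbers. -/
noncomputable def upperDensity (A : Set ℕ) : ℝ :=
  Filter.limsup (fun n : ℕ => ((A ∩ Set.Icc 1 n).ncard : ℝ) / n) Filter.atTop

/-- The lower density of a set of natural numbers. -/
noncomputable def lowerDensity (A : Set ℕ) : ℝ :=
  Filter.liminf (fun n : ℕ => ((A ∩ Set.Icc 1 n).ncard : ℝ) / n) Filter.atTop

/-- `{x, y}` is a Li-Yorke pair for `T`. -/
def IsLiYorkePair (T : X →L[𝕜] X) (x y : X) : Prop :=
  Filter.liminf (fun n : ℕ => (‖(T ^ n) x - (T ^ n) y‖₊ : ℝ≥0∞)) Filter.atTop = 0 ∧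
  0 < Filter.limsup (fun n : ℕ => (‖(T ^ n) x - (T ^ n) y‖₊ : ℝ≥0∞)) Filter.atTop

/-- `T` is Li-Yorke chaotic. -/
def LiYorkeChaotic (T : X →L[𝕜] X) : Prop :=
  ∃ Γ : Set X, ¬ Γ.Countable ∧ ∀ x ∈ Γ, ∀ y ∈ Γ, x ≠ y → IsLiYorkePair T x y

/-- `x` is an irregular vector for `T`. -/
def IrregularVector (T : X →L[𝕜] X) (x : X) : Prop :=
  Filter.liminf (fun n : ℕ => (‖(T ^ n) x‖₊ : ℝ≥0∞)) Filter.atTop = 0 ∧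
  Filter.limsup (fun n : ℕ => (‖(T ^ n) x‖₊ : ℝ≥0∞)) Filter.atTop = ⊤

/-- `x` is a distributionally irregular vector for `T`. -/
def DistIrregularVector (T : X →L[𝕜] X) (x : X) : Prop :=
  ∃ a b : ℕ → ℕ, StrictMono a ∧ StrictMono b ∧ (∀ k, 0 < a k) ∧ (∀ k, 0 < b k) ∧
    upperDensity (Set.range a) = 1 ∧ upperDensity (Set.range b) = 1 ∧
    Filter.Tendsto (fun k => ‖(T ^ (a k)) x‖) Filter.atTop (nhds 0) ∧
    Filter.Tendsto (fun k => ‖(T ^ (b k)) x‖) Filter.atTop Filter.atTop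

/-- `Γ` is a distributionally `ε`-scrambled set for `T`. -/
def DistScrambled (T : X →L[𝕜] X) (Γ : Set X) (ε : ℝ) : Prop :=
  ∀ x ∈ Γ, ∀ y ∈ Γ, x ≠ y →
    lowerDensity {n : ℕ | ‖(T ^ n) x - (T ^ n) y‖ < ε} = 0 ∧
    ∀ τ > (0:ℝ), upperDensity {n : ℕ | ‖(T ^ n) x - (T ^ n) y‖ < τ} = 1

/-- `T` is distributionally chaotic. -/
def DistChaotic (T : X →L[𝕜] X) : Prop :=
  ∃ Γ : Set X, ∃ ε > (0:ℝ), ¬ Γ.Countable ∧ DistScrambled T Γ ε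

/-- The Li-Yorke Chaos Criterion. -/
def LYChaosCriterion (T : X →L[𝕜] X) : Prop :=
  ∃ n : ℕ → ℕ, ∃ X₀ : Set X, StrictMono n ∧ (∀ k, 0 < n k) ∧
    (∀ x ∈ X₀, Filter.Tendsto (fun k : ℕ => (T ^ (n k)) x) Filter.atTop (nhds 0)) ∧
    ∀ C : ℝ, ∃ m : ℕ, ∃ y ∈ closure ((Submodule.span 𝕜 X₀ : Submodule 𝕜 X) : Set X),
      C * ‖y‖ < ‖(T ^ m) y‖

/-- The Strong Distributional Chaos Criterion with constant `r`. -/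
def SDCCriterion (T : X →L[𝕜] X) (r : ℝ) : Prop :=
  ∀ m : ℕ, ∃ x : X, x ≠ 0 ∧
    Filter.Tendsto (fun k : ℕ => ‖(T ^ k) x‖) Filter.atTop (nhds 0) ∧
    ∀ i : ℕ, 1 ≤ i → i ≤ m → r ^ i * ‖x‖ ≤ ‖(T ^ i) x‖

/-- The Distributional Chaos Criterion. -/
def DCCriterion (T : X →L[𝕜] X) : Prop :=
  ∃ x y : ℕ → X, ∃ N : ℕ → ℕ,
    (∀ m, x m ≠ 0) ∧ (∀ m, y m ≠ 0) ∧
    (∀ m, y m ∈ closure ((Submodule.span 𝕜 (Set.range x) : Submodule 𝕜 X) : Set X)) ∧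
    (∀ m, Filter.Tendsto (fun n : ℕ => (T ^ n) (x m)) Filter.atTop (nhds 0)) ∧
    (∀ m, 0 < N m) ∧ Monotone N ∧ Filter.Tendsto N Filter.atTop Filter.atTop ∧
    Filter.Tendsto
      (fun m : ℕ =>
        (({i : ℕ | i < N m ∧ (m : ℝ) * ‖y m‖ ≤ ‖(T ^ i) (y m)‖}).ncard : ℝ) / N m)
      Filter.atTop (nhds 1)

/-- `T` admits a dense irregular manifold. -/
def DenseIrregularManifold (T : X →L[𝕜] X) : Prop :=
  ∃ Y : Submodule 𝕜 X, Dense (Y : Set X) ∧ ∀ y ∈ Y, y ≠ 0 → IrregularVector T y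

/-- `T` admits a dense distributionally irregular manifold. -/
def DenseDistIrregularManifold (T : X →L[𝕜] X) : Prop :=
  ∃ Y : Submodule 𝕜 X, Dense (Y : Set X) ∧ ∀ y ∈ Y, y ≠ 0 → DistIrregularVector T y


/-- `S` is strictly singular: it is not bounded below on any infinite-dimensional subspace. -/
def StrictlySingular (S : X →L[𝕜] X) : Prop :=
  ∀ M : Submodule 𝕜 X, ¬ FiniteDimensional 𝕜 M →
    ¬ ∃ c : ℝ, 0 < c ∧ ∀ x ∈ M, c * ‖x‖ ≤ ‖S x‖

end Defs


section Aux
variable {𝕜 : Type*} [RCLike 𝕜] {X : Type*} [NormedAddCommGroup X] [NormedSpace 𝕜 X]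

lemma density_nonneg' (A : Set ℕ) (n : ℕ) : 0 ≤ ((A ∩ Set.Icc 1 n).ncard : ℝ) / n := by
  positivity

lemma ncard_inter_Icc_le (A : Set ℕ) (n : ℕ) : ((A ∩ Set.Icc 1 n).ncard : ℝ) ≤ n := by
  have h1 : (A ∩ Set.Icc 1 n).ncard ≤ (Set.Icc 1 n).ncard :=
    Set.ncard_le_ncard Set.inter_subset_right (Set.finite_Icc 1 n)
  have h2 : (Set.Icc 1 n).ncard = n := by
    rw [← Finset.coe_Icc, Set.ncard_coe_finset, Nat.card_Icc]; omega
  exact_mod_cast h1.trans_eq h2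

lemma density_le_one' (A : Set ℕ) (n : ℕ) : ((A ∩ Set.Icc 1 n).ncard : ℝ) / n ≤ 1 := by
  rcases Nat.eq_zero_or_pos n with h | h
  · simp [h]
  · rw [div_le_one (by exact_mod_cast h)]; exact ncard_inter_Icc_le A n

lemma ratio_le_one (A : Set ℕ) (n : ℕ) (hA : A ⊆ Set.Iio n) : ((A.ncard : ℝ)) / n ≤ 1 := by
  rcases Nat.eq_zero_or_pos n with h | h
  · simp [h]
  · rw [div_le_one (by exact_mod_cast h)]
    have h1 : A.ncard ≤ (Set.Iio n).ncard := Set.ncard_le_ncard hA (Set.finite_Iio n)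
    have h2 : (Set.Iio n).ncard = n := by
      rw [← Finset.coe_Iio, Set.ncard_coe_finset, Nat.card_Iio]
    exact_mod_cast h1.trans_eq h2

lemma tendsto_two_div : Filter.Tendsto (fun j : ℕ => 2/((j:ℝ)+1)) atTop (nhds 0) := by
  have h4 := (tendsto_const_div_atTop_nhds_zero_nat (2:ℝ)).comp (Filter.tendsto_add_atTop_nat 1)
  have : (fun j : ℕ => 2/((j:ℝ)+1)) = (fun n : ℕ => 2 / (n:ℝ)) ∘ (fun a => a + 1) := by
    funext j; simp [Function.comp]
  rw [this]; exact h4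

lemma upperDensity_eq_one_of_seq {A : Set ℕ} (g : ℕ → ℕ)
    (hg : Filter.Tendsto g Filter.atTop Filter.atTop)
    (h : ∀ j : ℕ, (1 : ℝ) - 2/(j+1) ≤ ((A ∩ Set.Icc 1 (g j)).ncard : ℝ) / (g j)) :
    upperDensity A = 1 := by
  have hb : IsBoundedUnder (· ≤ ·) atTop (fun n : ℕ => ((A ∩ Set.Icc 1 n).ncard : ℝ) / n) :=
    Filter.isBoundedUnder_of ⟨1, fun n => density_le_one' A n⟩
  have hcb : IsCoboundedUnder (· ≤ ·) atTop (fun n : ℕ => ((A ∩ Set.Icc 1 n).ncard : ℝ) / n) :=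
    isCoboundedUnder_le_of_le atTop fun n : ℕ => density_nonneg' A n
  refine le_antisymm ?_ ?_
  · exact limsup_le_of_le hcb (Filter.Eventually.of_forall fun n : ℕ => density_le_one' A n)
  · refine le_of_forall_sub_le fun ε hε => ?_
    refine le_limsup_of_frequently_le ?_ hb
    rw [Filter.frequently_atTop]
    intro B
    obtain ⟨j, hj1, hj2⟩ : ∃ j : ℕ, B ≤ g j ∧ 2/((j:ℝ)+1) ≤ ε := by
      have h1 : ∀ᶠ j : ℕ in atTop, B ≤ g j := hg.eventually_ge_atTop B
      have h2 : ∀ᶠ j : ℕ in atTop, 2/((j:ℝ)+1) ≤ ε :=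
        tendsto_two_div.eventually (eventually_le_nhds hε)
      exact ((h1.and h2).exists)
    exact ⟨g j, hj1, by linarith [h j]⟩

/-- Key counting lemma: from a distributionally unbounded orbit, get good densities. -/
lemma key_count (T : X →L[𝕜] X) (x : X) (b : ℕ → ℕ)
    (hUD : upperDensity (Set.range b) = 1)
    (hbT : Filter.Tendsto (fun k => ‖(T ^ (b k)) x‖) Filter.atTop Filter.atTop)
    (c : ℝ) (m n₀ : ℕ) :
    ∃ n, n₀ ≤ n ∧ 1 ≤ n ∧
      (1:ℝ) - 2/(m+1) ≤ (({i : ℕ | i < n ∧ c ≤ ‖(T ^ i) x‖}).ncard : ℝ) / n := by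
  obtain ⟨K, hK⟩ : ∃ K, ∀ k ≥ K, c ≤ ‖(T ^ (b k)) x‖ :=
    (hbT.eventually_ge_atTop c).exists_forall_of_atTop
  set f := fun n : ℕ => (((Set.range b) ∩ Set.Icc 1 n).ncard : ℝ) / n with hf
  have hδ : (0:ℝ) < 1/((m:ℝ)+1) := by positivity
  have hfreq : ∃ᶠ n in atTop, 1 - 1/((m:ℝ)+1) < f n := by
    apply frequently_lt_of_lt_limsup
    · exact isCoboundedUnder_le_of_le atTop fun n : ℕ => density_nonneg' (Set.range b) n
    · rw [show Filter.limsup f atTop = upperDensity (Set.range b) from rfl, hUD]; linarith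
  obtain ⟨n', hn'ge, hn'f⟩ := (frequently_atTop.1 hfreq) (max n₀ ((m+1) * (K+1)))
  refine ⟨n' + 1, ?_, le_add_self, ?_⟩
  · exact le_trans (le_max_left _ _) (hn'ge.trans (Nat.le_succ n'))
  · have hn'1 : 1 ≤ n' := by
      have : 1 ≤ (m+1) * (K+1) := Nat.one_le_iff_ne_zero.2 (by positivity)
      omega
    set A := {i : ℕ | i < n' + 1 ∧ c ≤ ‖(T ^ i) x‖} with hA
    have hAfin : A.Finite := (Set.finite_Iio (n'+1)).subset (fun i hi => hi.1)
    have hsub : (Set.range b) ∩ Set.Icc 1 n' ⊆ A ∪ b '' (Set.Iio K) := by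
      rintro i ⟨⟨k, rfl⟩, hi1, hi2⟩
      rcases lt_or_ge k K with h | h
      · exact Or.inr ⟨k, h, rfl⟩
      · exact Or.inl ⟨by omega, hK k h⟩
    have hcount : ((Set.range b ∩ Set.Icc 1 n').ncard : ℝ) ≤ A.ncard + K := by
      have h1 : (Set.range b ∩ Set.Icc 1 n').ncard ≤ (A ∪ b '' (Set.Iio K)).ncard :=
        Set.ncard_le_ncard hsub (hAfin.union ((Set.finite_Iio K).image b))
      have h2 : (A ∪ b '' (Set.Iio K)).ncard ≤ A.ncard + (b '' (Set.Iio K)).ncard :=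
        Set.ncard_union_le _ _
      have h3 : (b '' (Set.Iio K)).ncard ≤ K := by
        have := Set.ncard_image_le (f := b) (s := Set.Iio K) (Set.finite_Iio K)
        rwa [show (Set.Iio K).ncard = K by
          rw [← Finset.coe_Iio, Set.ncard_coe_finset, Nat.card_Iio]] at this
      exact_mod_cast (h1.trans h2).trans (by omega)
    have hRn : (1 - 1/((m:ℝ)+1)) * n' ≤ ((Set.range b ∩ Set.Icc 1 n').ncard : ℝ) := by
      have hn'pos : (0:ℝ) < n' := by exact_mod_cast hn'1
      have := hn'f.le
      rw [hf, le_div_iff₀ hn'pos] at this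
      linarith
    have hKn : ((m:ℝ)+1) * (K+1) ≤ n' := by
      have : (m+1) * (K+1) ≤ n' := le_trans (le_max_right _ _) hn'ge
      exact_mod_cast this
    have hnpos : (0:ℝ) < (n' : ℝ) + 1 := by positivity
    have hcard : (1 - 2/((m:ℝ)+1)) * ((n':ℝ) + 1) ≤ (A.ncard : ℝ) := by
      have hm1 : (0:ℝ) < (m:ℝ) + 1 := by positivity
      have h5 : ((m:ℝ)+1) * ((K:ℝ)+1) ≤ n' := by push_cast at hKn ⊢; linarith
      have h6 : (1 - 1/((m:ℝ)+1)) * n' - K ≤ (A.ncard : ℝ) := by linarith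
      have hδm : (1/((m:ℝ)+1)) * ((m:ℝ)+1) = 1 := by field_simp
      have h7 : (K:ℝ) + 1 ≤ (1/((m:ℝ)+1)) * n' := by nlinarith
      have h9 : (1 - 2/((m:ℝ)+1)) * ((n':ℝ)+1)
          = (n':ℝ) + 1 - (1/((m:ℝ)+1))*n' - (1/((m:ℝ)+1))*n' - 2*(1/((m:ℝ)+1)) := by ring
      have h10 : (1 - 1/((m:ℝ)+1)) * (n':ℝ) = (n':ℝ) - (1/((m:ℝ)+1))*n' := by ring
      rw [h9]; rw [h10] at h6
      linarith
    have hnpos' : (0:ℝ) < ((n' + 1 : ℕ) : ℝ) := by push_cast; linarith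
    rw [le_div_iff₀ hnpos']
    push_cast at hcard ⊢
    linarith

/-- squeeze: the DCC ratios tend to 1. -/
lemma ratio_tendsto_one {N : ℕ → ℕ} {A : ℕ → Set ℕ}
    (hA : ∀ m, A m ⊆ Set.Iio (N m))
    (hlow : ∀ m : ℕ, (1:ℝ) - 2/(m+1) ≤ ((A m).ncard : ℝ) / N m) :
    Filter.Tendsto (fun m : ℕ => (((A m).ncard : ℝ)) / N m) Filter.atTop (nhds 1) := by
  have h1 : Filter.Tendsto (fun m : ℕ => (1:ℝ) - 2/(m+1)) atTop (nhds 1) := by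
    have h0 : Filter.Tendsto (fun m : ℕ => (1:ℝ) - 2/((m:ℝ)+1)) atTop (nhds (1 - 0)) :=
      Filter.Tendsto.sub tendsto_const_nhds tendsto_two_div
    simpa using h0
  exact tendsto_of_tendsto_of_tendsto_of_le_of_le h1 tendsto_const_nhds hlow
    (fun m => ratio_le_one (A m) (N m) (hA m))

/-- Implication C: a distributionally irregular vector gives the DCC. -/
lemma distIrr_to_DCC (T : X →L[𝕜] X) (D : Set X) (hD : Dense D)
    (hD0 : ∀ z ∈ D, Filter.Tendsto (fun n : ℕ => (T ^ n) z) Filter.atTop (nhds 0))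
    (x : X) (hx : DistIrregularVector T x) : DCCriterion T := by
  obtain ⟨a, b, ha, hb, hapos, hbpos, hauD, hbuD, haT, hbT⟩ := hx
  have hxne : x ≠ 0 := by
    intro h
    obtain ⟨k, hk⟩ := (hbT.eventually_ge_atTop 1).exists
    rw [h] at hk; simp at hk; linarith
  have hxpos : 0 < ‖x‖ := norm_pos_iff.2 hxne
  -- approximating sequence from D
  have hz : ∀ m : ℕ, ∃ z ∈ D, dist x z < min (1/((m:ℝ)+1)) (‖x‖/2) := by
    intro m
    exact Metric.mem_closure_iff.1 (hD x) _ (lt_min (by positivity) (by positivity))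
  choose z hzD hzd using hz
  -- N construction
  have key := fun (m n₀ : ℕ) => key_count T x b hbuD hbT ((m:ℝ) * ‖x‖) m n₀
  choose F hF1 hF2 hF3 using key
  set N : ℕ → ℕ := fun m => Nat.rec (F 0 1) (fun m ih => F (m+1) (max (ih+1) (m+1))) m with hN
  have hsucc : ∀ m, N (m+1) = F (m+1) (max (N m + 1) (m+1)) := fun m => rfl
  have h1 : ∀ m, 1 ≤ N m := by
    intro m
    cases m with
    | zero => exact hF2 0 1
    | succ m => rw [hsucc]; exact le_trans (by omega) (le_trans (le_max_right _ _) (hF1 _ _))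
  have hmono : ∀ m, N m < N (m+1) := by
    intro m; rw [hsucc]
    exact lt_of_lt_of_le (by omega) (le_trans (le_max_left _ _) (hF1 _ _))
  have hgem : ∀ m, m ≤ N m := by
    intro m
    induction m with
    | zero => omega
    | succ m ih => have := hmono m; omega
  have hlow : ∀ m : ℕ, (1:ℝ) - 2/(m+1) ≤
      (({i : ℕ | i < N m ∧ (m:ℝ) * ‖x‖ ≤ ‖(T ^ i) x‖}).ncard : ℝ) / N m := by
    intro m
    cases m with
    | zero => exact hF3 0 1
    | succ m => rw [hsucc]; exact hF3 _ _
  refine ⟨z, fun _ => x, N, ?_, fun _ => hxne, ?_, fun m => hD0 (z m) (hzD m), ?_, ?_, ?_, ?_⟩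
  · -- z m ≠ 0
    intro m h
    have := hzd m
    rw [h, dist_zero_right] at this
    have := lt_of_lt_of_le this (min_le_right _ _)
    linarith
  · -- x ∈ closure span
    intro m
    have htz : Filter.Tendsto z atTop (nhds x) := by
      rw [tendsto_iff_dist_tendsto_zero]
      have hle : ∀ m : ℕ, dist (z m) x ≤ 1/(m+1) := fun m => by
        rw [dist_comm]; exact le_trans (hzd m).le (min_le_left _ _)
      refine squeeze_zero (fun m => dist_nonneg) hle ?_
      have := tendsto_two_div
      have h2 : Filter.Tendsto (fun j : ℕ => 1/((j:ℝ)+1)) atTop (nhds 0) := by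
        refine squeeze_zero (fun m => by positivity) (fun m => ?_) tendsto_two_div
        gcongr; norm_num
      exact h2
    exact mem_closure_of_tendsto htz (Filter.Eventually.of_forall fun m =>
      Submodule.subset_span (Set.mem_range_self m))
  · exact fun m => h1 m
  · exact monotone_nat_of_le_succ (fun m => (hmono m).le)
  · exact tendsto_atTop_mono hgem tendsto_id
  · exact ratio_tendsto_one (fun m i hi => hi.1) hlow

end Aux

section BAux
variable {𝕜 : Type*} [RCLike 𝕜] {X : Type*} [NormedAddCommGroup X] [NormedSpace 𝕜 X]

lemma pow_apply_norm_le (T : X →L[𝕜] X) (i : ℕ) (v : X) :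
    ‖(T ^ i) v‖ ≤ (max ‖T‖ 1) ^ i * ‖v‖ := by
  induction i with
  | zero => simp
  | succ i ih =>
    have h1 : (T ^ (i+1)) v = T ((T ^ i) v) := by
      rw [pow_succ']; rfl
    rw [h1, pow_succ]
    calc ‖T ((T ^ i) v)‖ ≤ ‖T‖ * ‖(T ^ i) v‖ := T.le_opNorm _
    _ ≤ (max ‖T‖ 1) * ((max ‖T‖ 1) ^ i * ‖v‖) := by
        apply mul_le_mul (le_max_left _ _) ih (norm_nonneg _)
        positivity
    _ = (max ‖T‖ 1) ^ i * (max ‖T‖ 1) * ‖v‖ := by ring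

/-- data for one step of the construction -/
structure BSt (X : Type*) where
  a : ℝ
  w : X
  v : X
  n : ℕ
  m : ℕ
  M : ℕ
  K : ℕ

variable (T : X →L[𝕜] X)

/-- the set of "large orbit" times for `y m` -/
def BS (y : ℕ → X) (N : ℕ → ℕ) (m : ℕ) : Set ℕ :=
  {i : ℕ | i < N m ∧ (m:ℝ) * ‖y m‖ ≤ ‖(T ^ i) (y m)‖}

/-- the invariant for step `j` of the construction -/
def BQ (y : ℕ → X) (N : ℕ → ℕ) (j : ℕ) (d : BSt X) : Prop :=
  0 < d.a ∧ d.a ≤ 1 ∧ ‖d.w‖ ≤ 2 ∧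
  Filter.Tendsto (fun n : ℕ => (T ^ n) d.v) Filter.atTop (nhds 0) ∧
  1 ≤ d.n ∧ d.n ≤ d.M ∧ d.K = (j+1) * d.M ∧
  (j+1) * (d.n + 1) ≤ N d.m ∧ N d.m ≤ d.M ∧
  ((1:ℝ) - 1/(j+1)) * (N d.m) ≤ ((BS T y N d.m).ncard : ℝ) ∧
  (∀ i ∈ BS T y N d.m, d.n ≤ i → (j:ℝ) + 2 ≤ ‖(T ^ i) d.v‖) ∧
  (∀ i, d.M ≤ i → i ≤ d.K → ‖(T ^ i) d.v‖ ≤ (1/2:ℝ)^j) ∧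
  d.a * ‖d.w‖ ≤ (1/2:ℝ)^j

set_option maxHeartbeats 2000000 in
lemma bstep_exists (D : Set X) (hD : Dense D)
    (hD0 : ∀ z ∈ D, Filter.Tendsto (fun n : ℕ => (T ^ n) z) Filter.atTop (nhds 0))
    (y : ℕ → X) (N : ℕ → ℕ) (hy : ∀ m, y m ≠ 0) (hN1 : ∀ m, 0 < N m)
    (hNtop : Filter.Tendsto N Filter.atTop Filter.atTop)
    (hratio : Filter.Tendsto (fun m : ℕ => (((BS T y N m).ncard : ℝ)) / N m)
      Filter.atTop (nhds 1))
    (j : ℕ) (K₀ : ℕ) (v₀ : X)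
    (hv₀ : Filter.Tendsto (fun n : ℕ => (T ^ n) v₀) Filter.atTop (nhds 0)) :
    ∃ d : BSt X, BQ T y N j d ∧ d.v = v₀ + ((d.a : ℝ) : 𝕜) • d.w ∧ K₀ < d.n ∧
      d.a * (max ‖T‖ 1) ^ K₀ * ‖d.w‖ ≤ (1/2:ℝ)^j := by
  set C := max ‖T‖ 1 with hC
  have hC1 : (1:ℝ) ≤ C := le_max_right _ _
  have hCpos : (0:ℝ) < C := lt_of_lt_of_le one_pos hC1
  -- choose n
  obtain ⟨n₁, hn₁⟩ : ∃ n₁, ∀ i ≥ n₁, ‖(T ^ i) v₀‖ ≤ 1 := by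
    have := (NormedAddCommGroup.tendsto_nhds_zero.mp hv₀ 1 one_pos)
    obtain ⟨n₁, hn₁⟩ := Filter.eventually_atTop.1 this
    exact ⟨n₁, fun i hi => (hn₁ i hi).le⟩
  set n := max n₁ (K₀ + 1) with hn
  have hnn₁ : n₁ ≤ n := le_max_left _ _
  have hnK₀ : K₀ < n := lt_of_lt_of_le (Nat.lt_succ_self _) (le_max_right _ _)
  have hn1 : 1 ≤ n := by omega
  -- choose a
  set a := (1/2:ℝ)^j / (2 * C ^ K₀) with ha
  have hapos : 0 < a := by positivity
  have ha1 : a ≤ 1 := by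
    rw [ha, div_le_one (by positivity)]
    calc (1/2:ℝ)^j ≤ 1 := by
          apply pow_le_one₀ <;> norm_num
    _ ≤ 2 * C ^ K₀ := by nlinarith [one_le_pow₀ (a := C) (n := K₀) hC1]
  have haC : a * C ^ K₀ * 2 = (1/2:ℝ)^j := by
    rw [ha]; field_simp
  -- choose m
  have e1 : ∀ᶠ m : ℕ in Filter.atTop, (j+1) * (n + 1) ≤ N m :=
    hNtop.eventually_ge_atTop _
  have e2 : ∀ᶠ m : ℕ in Filter.atTop,
      ((1:ℝ) - 1/(j+1)) ≤ (((BS T y N m).ncard : ℝ)) / N m := by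
    apply hratio.eventually (eventually_ge_nhds ?_)
    have : (0:ℝ) < 1/((j:ℝ)+1) := by positivity
    linarith
  have e3 : ∀ᶠ m : ℕ in Filter.atTop, ((j:ℝ)+4)/a ≤ (m:ℝ) :=
    tendsto_natCast_atTop_atTop.eventually_ge_atTop _
  obtain ⟨m, hm1, hm2, hm3⟩ := (e1.and (e2.and e3)).exists
  have hNm : (0:ℝ) < (N m : ℝ) := by exact_mod_cast hN1 m
  have hS : ((1:ℝ) - 1/(j+1)) * (N m) ≤ ((BS T y N m).ncard : ℝ) := by
    rw [le_div_iff₀ hNm] at hm2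
    linarith
  have ham : (j:ℝ) + 4 ≤ a * m := by
    rw [div_le_iff₀ hapos] at hm3; linarith [hm3]
  -- choose w near the normalized y m
  set yh := ((‖y m‖⁻¹ : ℝ) : 𝕜) • (y m) with hyh
  have hyhnorm : ‖yh‖ = 1 := by
    rw [hyh, norm_smul, RCLike.norm_ofReal, abs_inv, abs_norm]
    field_simp [norm_ne_zero_iff.2 (hy m)]
  have hyhorb : ∀ i ∈ BS T y N m, (m:ℝ) ≤ ‖(T ^ i) yh‖ := by
    intro i hi
    rw [hyh, map_smul, norm_smul, RCLike.norm_ofReal, abs_inv, abs_norm]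
    rw [inv_mul_eq_div, le_div_iff₀ (norm_pos_iff.2 (hy m))]
    exact hi.2
  set δ := min 1 ((C ^ (N m))⁻¹) with hδ
  have hδpos : 0 < δ := lt_min one_pos (by positivity)
  obtain ⟨w, hwD, hwd⟩ : ∃ w ∈ D, dist yh w < δ :=
    Metric.mem_closure_iff.1 (hD yh) δ hδpos
  have hwnorm : ‖w‖ ≤ 2 := by
    have : ‖w - yh‖ < δ := by rwa [dist_comm, dist_eq_norm] at hwd
    have h2 : ‖w‖ ≤ ‖yh‖ + ‖w - yh‖ := by
      have := norm_add_le (w - yh) yh; simpa using norm_le_insert' w yh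
    have hδ1 : δ ≤ 1 := min_le_left _ _
    rw [hyhnorm] at h2; linarith
  have hworb : ∀ i ∈ BS T y N m, (m:ℝ) - 1 ≤ ‖(T ^ i) w‖ := by
    intro i hi
    have h1 : ‖(T ^ i) yh - (T ^ i) w‖ ≤ 1 := by
      rw [← map_sub]
      calc ‖(T ^ i) (yh - w)‖ ≤ C ^ i * ‖yh - w‖ := pow_apply_norm_le T i _
      _ ≤ C ^ (N m) * (C ^ (N m))⁻¹ := by
          apply mul_le_mul (pow_le_pow_right₀ hC1 hi.1.le)
          · rw [← dist_eq_norm]; exact hwd.le.trans (min_le_right _ _)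
          · exact norm_nonneg _
          · positivity
      _ = 1 := by field_simp
    have h2 := hyhorb i hi
    have h3 : ‖(T ^ i) yh‖ - ‖(T ^ i) w‖ ≤ 1 :=
      le_trans (norm_sub_norm_le _ _) h1
    linarith
  -- the new partial sum
  set v := v₀ + ((a : ℝ) : 𝕜) • w with hv
  have hvT : Filter.Tendsto (fun n : ℕ => (T ^ n) v) Filter.atTop (nhds 0) := by
    have h1 : Filter.Tendsto (fun n : ℕ => (T ^ n) (((a : ℝ) : 𝕜) • w))
        Filter.atTop (nhds 0) := by
      have := Filter.Tendsto.const_smul (hD0 w hwD) ((a : ℝ) : 𝕜)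
      simpa [map_smul] using this
    have := hv₀.add h1
    simpa [hv, map_add] using this
  have hvlarge : ∀ i ∈ BS T y N m, n ≤ i → (j:ℝ) + 2 ≤ ‖(T ^ i) v‖ := by
    intro i hi hni
    have h1 : ‖(T ^ i) v₀‖ ≤ 1 := hn₁ i (le_trans hnn₁ hni)
    have h2 : (m:ℝ) - 1 ≤ ‖(T ^ i) w‖ := hworb i hi
    have h5 : ‖((a:ℝ):𝕜) • (T ^ i) w‖ = a * ‖(T ^ i) w‖ := by
      rw [norm_smul, RCLike.norm_ofReal, abs_of_pos hapos]
    have h3 : a * ‖(T ^ i) w‖ - ‖(T ^ i) v₀‖ ≤ ‖(T ^ i) v‖ := by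
      have h6 : (T ^ i) v = (T ^ i) v₀ + ((a:ℝ):𝕜) • (T ^ i) w := by
        rw [hv, map_add, map_smul]
      have h7 := norm_sub_norm_le (((a:ℝ):𝕜) • (T ^ i) w)
        ((T ^ i) v₀ + ((a:ℝ):𝕜) • (T ^ i) w)
      have h8 : ((a:ℝ):𝕜) • (T ^ i) w - ((T ^ i) v₀ + ((a:ℝ):𝕜) • (T ^ i) w)
          = -((T ^ i) v₀) := by abel
      rw [h8, norm_neg, h5] at h7
      rw [h6]; linarith
    have h7 : a * ((m:ℝ) - 1) ≤ a * ‖(T ^ i) w‖ :=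
      mul_le_mul_of_nonneg_left h2 hapos.le
    nlinarith
  -- choose M
  obtain ⟨M₁, hM₁⟩ : ∃ M₁, ∀ i ≥ M₁, ‖(T ^ i) v‖ ≤ (1/2:ℝ)^j := by
    have := (NormedAddCommGroup.tendsto_nhds_zero.mp hvT ((1/2:ℝ)^j) (by positivity))
    obtain ⟨M₁, hM₁⟩ := Filter.eventually_atTop.1 this
    exact ⟨M₁, fun i hi => (hM₁ i hi).le⟩
  set M := max (max n (N m)) M₁ with hM
  have hpow1 : (1:ℝ) ≤ C ^ K₀ := one_le_pow₀ hC1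
  have hbd1 : a * ‖w‖ ≤ (1/2:ℝ)^j := by nlinarith [norm_nonneg w]
  have hbd2 : a * C ^ K₀ * ‖w‖ ≤ (1/2:ℝ)^j := by
    have h0 : (0:ℝ) ≤ a * C ^ K₀ := by positivity
    calc a * C ^ K₀ * ‖w‖ ≤ a * C ^ K₀ * 2 := mul_le_mul_of_nonneg_left hwnorm h0
    _ = (1/2:ℝ)^j := haC
  exact ⟨⟨a, w, v, n, m, M, (j+1) * M⟩,
    ⟨hapos, ha1, hwnorm, hvT, hn1,
      le_trans (le_max_left _ _) (le_max_left _ _), rfl, hm1,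
      le_trans (le_max_right _ _) (le_max_left _ _), hS, hvlarge,
      fun i hMi _ => hM₁ i (le_trans (le_max_right _ _) hMi), hbd1⟩,
    rfl, hnK₀, hbd2⟩

end BAux

section BMain
variable {𝕜 : Type*} [RCLike 𝕜] {X : Type*} [NormedAddCommGroup X] [NormedSpace 𝕜 X]
variable (T : X →L[𝕜] X)

lemma tendsto_zero_orbit : Filter.Tendsto (fun n : ℕ => (T ^ n) (0:X)) Filter.atTop (nhds 0) := by
  simp only [map_zero]
  exact tendsto_const_nhds

noncomputable def bseq (D : Set X) (hD : Dense D)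
    (hD0 : ∀ z ∈ D, Filter.Tendsto (fun n : ℕ => (T ^ n) z) Filter.atTop (nhds 0))
    (y : ℕ → X) (N : ℕ → ℕ) (hy : ∀ m, y m ≠ 0) (hN1 : ∀ m, 0 < N m)
    (hNtop : Filter.Tendsto N Filter.atTop Filter.atTop)
    (hratio : Filter.Tendsto (fun m : ℕ => (((BS T y N m).ncard : ℝ)) / N m)
      Filter.atTop (nhds 1)) : ∀ j : ℕ, {d : BSt X // BQ T y N j d}
  | 0 => ⟨(bstep_exists T D hD hD0 y N hy hN1 hNtop hratio 0 1 0
        (tendsto_zero_orbit T)).choose,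
      (bstep_exists T D hD hD0 y N hy hN1 hNtop hratio 0 1 0
        (tendsto_zero_orbit T)).choose_spec.1⟩
  | (j+1) =>
    let p := bseq D hD hD0 y N hy hN1 hNtop hratio j
    ⟨(bstep_exists T D hD hD0 y N hy hN1 hNtop hratio (j+1) p.1.K p.1.v
        p.2.2.2.2.1).choose,
      (bstep_exists T D hD hD0 y N hy hN1 hNtop hratio (j+1) p.1.K p.1.v
        p.2.2.2.2.1).choose_spec.1⟩

lemma bseq_succ_spec (D : Set X) (hD : Dense D)
    (hD0 : ∀ z ∈ D, Filter.Tendsto (fun n : ℕ => (T ^ n) z) Filter.atTop (nhds 0))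
    (y : ℕ → X) (N : ℕ → ℕ) (hy : ∀ m, y m ≠ 0) (hN1 : ∀ m, 0 < N m)
    (hNtop : Filter.Tendsto N Filter.atTop Filter.atTop)
    (hratio : Filter.Tendsto (fun m : ℕ => (((BS T y N m).ncard : ℝ)) / N m)
      Filter.atTop (nhds 1)) (j : ℕ) :
    (bseq T D hD hD0 y N hy hN1 hNtop hratio (j+1)).1.v
        = (bseq T D hD hD0 y N hy hN1 hNtop hratio j).1.v
          + (((bseq T D hD hD0 y N hy hN1 hNtop hratio (j+1)).1.a : ℝ) : 𝕜)
            • (bseq T D hD hD0 y N hy hN1 hNtop hratio (j+1)).1.w ∧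
      (bseq T D hD hD0 y N hy hN1 hNtop hratio j).1.K
        < (bseq T D hD hD0 y N hy hN1 hNtop hratio (j+1)).1.n ∧
      (bseq T D hD hD0 y N hy hN1 hNtop hratio (j+1)).1.a
          * (max ‖T‖ 1) ^ ((bseq T D hD hD0 y N hy hN1 hNtop hratio j).1.K)
          * ‖(bseq T D hD hD0 y N hy hN1 hNtop hratio (j+1)).1.w‖ ≤ (1/2:ℝ)^(j+1) := by
  have h := (bstep_exists T D hD hD0 y N hy hN1 hNtop hratio (j+1)
      (bseq T D hD hD0 y N hy hN1 hNtop hratio j).1.K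
      (bseq T D hD hD0 y N hy hN1 hNtop hratio j).1.v
      (bseq T D hD hD0 y N hy hN1 hNtop hratio j).2.2.2.2.1).choose_spec
  exact ⟨h.2.1, h.2.2.1, h.2.2.2⟩

end BMain

section BMain2
variable {𝕜 : Type*} [RCLike 𝕜] {X : Type*} [NormedAddCommGroup X] [NormedSpace 𝕜 X]

lemma ncard_le_ncard_add_of_subset_union_Iio {S B : Set ℕ} {n : ℕ}
    (h : S ⊆ B ∪ Set.Iio n) (hBfin : B.Finite) : (S.ncard : ℝ) ≤ B.ncard + n := by
  have h1 : S.ncard ≤ (B ∪ Set.Iio n).ncard :=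
    Set.ncard_le_ncard h (hBfin.union (Set.finite_Iio n))
  have h2 : (B ∪ Set.Iio n).ncard ≤ B.ncard + (Set.Iio n).ncard := Set.ncard_union_le _ _
  have h3 : (Set.Iio n).ncard = n := by
    rw [← Finset.coe_Iio, Set.ncard_coe_finset, Nat.card_Iio]
  exact_mod_cast (h1.trans h2).trans_eq (by rw [h3])

lemma cond3_to_distIrr [CompleteSpace X] (T : X →L[𝕜] X) (D : Set X) (hD : Dense D)
    (hD0 : ∀ z ∈ D, Filter.Tendsto (fun n : ℕ => (T ^ n) z) Filter.atTop (nhds 0))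
    (y : ℕ → X) (N : ℕ → ℕ) (hy : ∀ m, y m ≠ 0) (hN1 : ∀ m, 0 < N m)
    (hNtop : Filter.Tendsto N Filter.atTop Filter.atTop)
    (hratio : Filter.Tendsto (fun m : ℕ => (((BS T y N m).ncard : ℝ)) / N m)
      Filter.atTop (nhds 1)) :
    ∃ x : X, DistIrregularVector T x := by
  classical
  set C := max ‖T‖ 1 with hC
  have hC1 : (1:ℝ) ≤ C := le_max_right _ _
  set d : ℕ → BSt X := fun j => (bseq T D hD hD0 y N hy hN1 hNtop hratio j).1 with hd
  have q : ∀ j, BQ T y N j (d j) := fun j => (bseq T D hD hD0 y N hy hN1 hNtop hratio j).2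
  have r : ∀ j, (d (j+1)).v = (d j).v + (((d (j+1)).a : ℝ) : 𝕜) • (d (j+1)).w ∧
      (d j).K < (d (j+1)).n ∧
      (d (j+1)).a * C ^ ((d j).K) * ‖(d (j+1)).w‖ ≤ (1/2:ℝ)^(j+1) :=
    fun j => bseq_succ_spec T D hD hD0 y N hy hN1 hNtop hratio j
  have qapos : ∀ j, 0 < (d j).a := fun j => (q j).1
  have qa1 : ∀ j, (d j).a ≤ 1 := fun j => (q j).2.1
  have qw : ∀ j, ‖(d j).w‖ ≤ 2 := fun j => (q j).2.2.1
  have qv : ∀ j, Filter.Tendsto (fun n : ℕ => (T ^ n) (d j).v) Filter.atTop (nhds 0) :=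
    fun j => (q j).2.2.2.1
  have qn1 : ∀ j, 1 ≤ (d j).n := fun j => (q j).2.2.2.2.1
  have qnM : ∀ j, (d j).n ≤ (d j).M := fun j => (q j).2.2.2.2.2.1
  have qK : ∀ j, (d j).K = (j+1) * (d j).M := fun j => (q j).2.2.2.2.2.2.1
  have qN : ∀ j, (j+1) * ((d j).n + 1) ≤ N (d j).m := fun j => (q j).2.2.2.2.2.2.2.1
  have qNM : ∀ j, N (d j).m ≤ (d j).M := fun j => (q j).2.2.2.2.2.2.2.2.1
  have qS : ∀ j, ((1:ℝ) - 1/(j+1)) * (N (d j).m) ≤ ((BS T y N (d j).m).ncard : ℝ) :=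
    fun j => (q j).2.2.2.2.2.2.2.2.2.1
  have qlarge : ∀ j, ∀ i ∈ BS T y N (d j).m, (d j).n ≤ i → (j:ℝ) + 2 ≤ ‖(T ^ i) (d j).v‖ :=
    fun j => (q j).2.2.2.2.2.2.2.2.2.2.1
  have qsmall : ∀ j, ∀ i, (d j).M ≤ i → i ≤ (d j).K → ‖(T ^ i) (d j).v‖ ≤ (1/2:ℝ)^j :=
    fun j => (q j).2.2.2.2.2.2.2.2.2.2.2.1
  have qaw : ∀ j, (d j).a * ‖(d j).w‖ ≤ (1/2:ℝ)^j :=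
    fun j => (q j).2.2.2.2.2.2.2.2.2.2.2.2
  -- basic order facts
  have hMK : ∀ j, (d j).M ≤ (d j).K := fun j => by
    rw [qK j]; nlinarith [qnM j, qn1 j]
  have hKmono : StrictMono (fun j => (d j).K) := by
    apply strictMono_nat_of_lt_succ
    intro j
    exact lt_of_lt_of_le (r j).2.1 (le_trans (qnM (j+1)) (hMK (j+1)))
  have hnmono : StrictMono (fun j => (d j).n) := by
    apply strictMono_nat_of_lt_succ
    intro j
    exact lt_of_le_of_lt (le_trans (qnM j) (hMK j)) (r j).2.1
  have hKn : ∀ j J, j < J → (d j).K < (d J).n := by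
    intro j J h
    exact lt_of_lt_of_le (r j).2.1 (hnmono.monotone h)
  have hNK : ∀ j, N (d j).m ≤ (d j).K := fun j => le_trans (qNM j) (hMK j)
  -- the vector x
  have hcau : CauchySeq (fun j => (d j).v) := by
    apply cauchySeq_of_le_geometric (1/2:ℝ) 1 (by norm_num)
    intro j
    rw [dist_eq_norm, (r j).1]
    have h1 : (d j).v - ((d j).v + (((d (j+1)).a : ℝ) : 𝕜) • (d (j+1)).w)
        = -((((d (j+1)).a : ℝ) : 𝕜) • (d (j+1)).w) := by abel
    rw [h1, norm_neg, norm_smul, RCLike.norm_ofReal, abs_of_pos (qapos (j+1))]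
    have h2 := qaw (j+1)
    have h3 : ((1:ℝ)/2)^(j+1) ≤ (1/2)^j := by
      apply pow_le_pow_of_le_one <;> norm_num
    linarith
  obtain ⟨x, hx⟩ := cauchySeq_tendsto_of_complete hcau
  -- tail estimate
  have htail : ∀ j i, i ≤ (d j).K → ‖(T ^ i) (x - (d j).v)‖ ≤ (1/2:ℝ)^j := by
    intro j i hiK
    have key : ∀ L, j ≤ L → ‖(T ^ i) ((d L).v - (d j).v)‖ ≤ (1/2:ℝ)^j - (1/2:ℝ)^L := by
      intro L hL
      induction L, hL using Nat.le_induction with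
      | base => simp
      | succ L hL ih =>
        have hsplit : (d (L+1)).v - (d j).v
            = ((d L).v - (d j).v) + (((d (L+1)).a : ℝ) : 𝕜) • (d (L+1)).w := by
          rw [(r L).1]; abel
        have hterm : ‖(T ^ i) ((((d (L+1)).a : ℝ) : 𝕜) • (d (L+1)).w)‖ ≤ (1/2:ℝ)^(L+1) := by
          rw [map_smul, norm_smul, RCLike.norm_ofReal, abs_of_pos (qapos (L+1))]
          have h1 : ‖(T ^ i) ((d (L+1)).w)‖ ≤ C ^ i * ‖(d (L+1)).w‖ := pow_apply_norm_le T i _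
          have h2 : C ^ i ≤ C ^ ((d L).K) :=
            pow_le_pow_right₀ hC1 (le_trans hiK (hKmono.monotone hL))
          have h3 := (r L).2.2
          have h4 : (d (L+1)).a * ‖(T ^ i) ((d (L+1)).w)‖
              ≤ (d (L+1)).a * (C ^ ((d L).K) * ‖(d (L+1)).w‖) := by
            apply mul_le_mul_of_nonneg_left _ (qapos (L+1)).le
            calc ‖(T ^ i) ((d (L+1)).w)‖ ≤ C ^ i * ‖(d (L+1)).w‖ := h1
            _ ≤ C ^ ((d L).K) * ‖(d (L+1)).w‖ :=
                mul_le_mul_of_nonneg_right h2 (norm_nonneg _)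
          calc (d (L+1)).a * ‖(T ^ i) ((d (L+1)).w)‖
              ≤ (d (L+1)).a * (C ^ ((d L).K) * ‖(d (L+1)).w‖) := h4
          _ = (d (L+1)).a * C ^ ((d L).K) * ‖(d (L+1)).w‖ := by ring
          _ ≤ (1/2:ℝ)^(L+1) := h3
        have hpow : ((1:ℝ)/2)^(L+1) = (1/2:ℝ)^L * (1/2) := by rw [pow_succ]
        calc ‖(T ^ i) ((d (L+1)).v - (d j).v)‖
            = ‖(T ^ i) ((d L).v - (d j).v) + (T ^ i) ((((d (L+1)).a : ℝ) : 𝕜) • (d (L+1)).w)‖ := by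
              rw [hsplit, map_add]
        _ ≤ ‖(T ^ i) ((d L).v - (d j).v)‖
              + ‖(T ^ i) ((((d (L+1)).a : ℝ) : 𝕜) • (d (L+1)).w)‖ := norm_add_le _ _
        _ ≤ ((1/2:ℝ)^j - (1/2:ℝ)^L) + (1/2:ℝ)^(L+1) := by linarith
        _ = (1/2:ℝ)^j - (1/2:ℝ)^(L+1) := by rw [hpow]; ring
    have h1 : Filter.Tendsto (fun L => ‖(T ^ i) ((d L).v - (d j).v)‖)
        Filter.atTop (nhds ‖(T ^ i) (x - (d j).v)‖) := by
      have h2 : Filter.Tendsto (fun L => (d L).v - (d j).v) Filter.atTop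
          (nhds (x - (d j).v)) := hx.sub tendsto_const_nhds
      exact (continuous_norm.tendsto _).comp (((T ^ i).continuous.tendsto _).comp h2)
    apply le_of_tendsto h1
    filter_upwards [Filter.eventually_ge_atTop j] with L hL
    have := key L hL
    have hpos : (0:ℝ) < (1/2:ℝ)^L := by positivity
    linarith
  -- large and small orbit estimates for x
  have hlargex : ∀ j, ∀ i ∈ BS T y N (d j).m, (d j).n ≤ i → (j:ℝ) + 1 ≤ ‖(T ^ i) x‖ := by
    intro j i hi hni
    have h1 : i ≤ (d j).K := le_trans (le_of_lt hi.1) (hNK j)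
    have h2 := htail j i h1
    have h3 := qlarge j i hi hni
    have h4 : (T ^ i) x = (T ^ i) ((d j).v) + (T ^ i) (x - (d j).v) := by
      rw [← map_add]
      congr 1
      abel
    have h5 := norm_sub_norm_le ((T ^ i) ((d j).v)) (-((T ^ i) (x - (d j).v)))
    have hp : ((1:ℝ)/2)^j ≤ 1 := by
      apply pow_le_one₀ <;> norm_num
    rw [h4]
    have h6 : ‖(T ^ i) ((d j).v)‖ - ‖(T ^ i) (x - (d j).v)‖
        ≤ ‖(T ^ i) ((d j).v) + (T ^ i) (x - (d j).v)‖ := by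
      have h7 := norm_sub_norm_le ((T ^ i) ((d j).v))
        ((T ^ i) ((d j).v) + (T ^ i) (x - (d j).v))
      have heq : (T ^ i) ((d j).v) - ((T ^ i) ((d j).v) + (T ^ i) (x - (d j).v))
          = -((T ^ i) (x - (d j).v)) := by abel
      rw [heq, norm_neg] at h7
      linarith
    linarith
  have hsmallx : ∀ j, ∀ i, (d j).M ≤ i → i ≤ (d j).K → ‖(T ^ i) x‖ ≤ 2 * (1/2:ℝ)^j := by
    intro j i h1 h2
    have h3 := htail j i h2
    have h4 := qsmall j i h1 h2
    have h5 : (T ^ i) x = (T ^ i) ((d j).v) + (T ^ i) (x - (d j).v) := by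
      rw [← map_add]; congr 1; abel
    rw [h5]
    calc ‖(T ^ i) ((d j).v) + (T ^ i) (x - (d j).v)‖
        ≤ ‖(T ^ i) ((d j).v)‖ + ‖(T ^ i) (x - (d j).v)‖ := norm_add_le _ _
    _ ≤ 2 * (1/2:ℝ)^j := by linarith
  -- the two index sets
  set U : Set ℕ := ⋃ j, (BS T y N (d j).m ∩ Set.Ici (d j).n) with hU
  set Z : Set ℕ := ⋃ j, Set.Icc (d j).M (d j).K with hZ
  have hU1 : ∀ i ∈ U, 1 ≤ i := by
    intro i hi
    rw [hU, Set.mem_iUnion] at hi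
    obtain ⟨j, hij⟩ := hi
    exact le_trans (qn1 j) hij.2
  have hZ1 : ∀ i ∈ Z, 1 ≤ i := by
    intro i hi
    rw [hZ, Set.mem_iUnion] at hi
    obtain ⟨j, hij⟩ := hi
    exact le_trans (le_trans (qn1 j) (qnM j)) hij.1
  have hUlarge : ∀ J : ℕ, ∀ i ∈ U, (d J).n ≤ i → (J:ℝ) + 1 ≤ ‖(T ^ i) x‖ := by
    intro J i hi hJi
    rw [hU, Set.mem_iUnion] at hi
    obtain ⟨j, hij⟩ := hi
    have hjJ : J ≤ j := by
      by_contra h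
      push_neg at h
      have h2 := hKn j J h
      have h3 : i < N (d j).m := hij.1.1
      have h4 := hNK j
      omega
    have h5 := hlargex j i hij.1 hij.2
    have hc : (J:ℝ) ≤ (j:ℝ) := Nat.cast_le.2 hjJ
    linarith
  have hZsmall : ∀ J : ℕ, ∀ i ∈ Z, (d J).M ≤ i → ‖(T ^ i) x‖ ≤ 2 * (1/2:ℝ)^J := by
    intro J i hi hJi
    rw [hZ, Set.mem_iUnion] at hi
    obtain ⟨j, hij⟩ := hi
    have hjJ : J ≤ j := by
      by_contra h
      push_neg at h
      have h2 := hKn j J h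
      have h3 : i ≤ (d j).K := hij.2
      have h4 := qnM J
      omega
    have h5 := hsmallx j i hij.1 hij.2
    have h6 : ((1:ℝ)/2)^j ≤ (1/2)^J :=
      pow_le_pow_of_le_one (by norm_num) (by norm_num) hjJ
    linarith
  -- nonempty blocks
  have hBne : ∀ j, 1 ≤ j → ∃ i, i ∈ BS T y N (d j).m ∩ Set.Ici (d j).n := by
    intro j hj
    by_contra h
    push_neg at h
    have hsub : BS T y N (d j).m ⊆ Set.Iio ((d j).n) := by
      intro i hi
      by_contra h2
      simp only [Set.mem_Iio, not_lt] at h2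
      exact h i ⟨hi, h2⟩
    have hcard : ((BS T y N (d j).m).ncard : ℝ) ≤ ((d j).n : ℝ) := by
      have h1 := Set.ncard_le_ncard hsub (Set.finite_Iio _)
      have h2 : (Set.Iio ((d j).n)).ncard = (d j).n := by
        rw [← Finset.coe_Iio, Set.ncard_coe_finset, Nat.card_Iio]
      exact_mod_cast h1.trans_eq h2
    have hNr : ((j:ℝ)+1) * (((d j).n : ℝ) + 1) ≤ (N (d j).m : ℝ) := by
      exact_mod_cast qN j
    have hS := qS j
    have hj1 : (1:ℝ) ≤ (j:ℝ) := by exact_mod_cast hj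
    have hδ : (1:ℝ)/((j:ℝ)+1) ≤ 1/2 := by
      rw [div_le_div_iff₀ (by linarith) (by norm_num)]
      linarith
    have hNpos : (0:ℝ) ≤ (N (d j).m : ℝ) := Nat.cast_nonneg _
    have hn0 : (0:ℝ) ≤ ((d j).n : ℝ) := Nat.cast_nonneg _
    have hN2 : 2 * (((d j).n : ℝ) + 1) ≤ (N (d j).m : ℝ) := by nlinarith
    nlinarith [hS, hcard, hN2, hδ, hNpos]
  -- infinitude
  have hUinf : U.Infinite := by
    apply Set.infinite_of_not_bddAbove
    rintro ⟨c, hc⟩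
    obtain ⟨i, hi⟩ := hBne (c+1) (by omega)
    have h1 : i ∈ U := by rw [hU, Set.mem_iUnion]; exact ⟨c+1, hi⟩
    have h2 : i ≤ c := hc h1
    have h3 : c+1 ≤ (d (c+1)).n := hnmono.le_apply
    have h4 : (d (c+1)).n ≤ i := hi.2
    omega
  have hZinf : Z.Infinite := by
    apply Set.infinite_of_not_bddAbove
    rintro ⟨c, hc⟩
    have h1 : (d (c+1)).K ∈ Z := by
      rw [hZ, Set.mem_iUnion]
      exact ⟨c+1, Set.mem_Icc.2 ⟨hMK _, le_rfl⟩⟩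
    have h2 := hc h1
    have h3 : c+1 ≤ (d (c+1)).K := hKmono.le_apply
    omega
  -- density of U
  have hUden : upperDensity U = 1 := by
    apply upperDensity_eq_one_of_seq (fun j => N (d j).m - 1)
    · have hle : ∀ j : ℕ, j ≤ N (d j).m - 1 := by
        intro j
        have h1 := qN j
        have h2 := qn1 j
        have h3 : (j+1) * 2 ≤ (j+1) * ((d j).n + 1) := Nat.mul_le_mul_left _ (by omega)
        omega
      exact tendsto_atTop_mono hle tendsto_id
    · intro j
      rcases Nat.eq_zero_or_pos j with rfl | hj
      · have h0 := density_nonneg' U (N (d 0).m - 1)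
        norm_num
        linarith
      · set nj := (d j).n with hnj
        set Nm := N (d j).m with hNm
        have hB : BS T y N (d j).m ∩ Set.Ici nj ⊆ U ∩ Set.Icc 1 (Nm - 1) := by
          intro i hi
          refine ⟨by rw [hU, Set.mem_iUnion]; exact ⟨j, hi⟩, ?_, ?_⟩
          · exact le_trans (qn1 j) hi.2
          · have := hi.1.1; omega
        have hfinB : (BS T y N (d j).m ∩ Set.Ici nj).Finite :=
          (Set.finite_Iio Nm).subset (fun i hi => hi.1.1)
        have hcard1 : (((BS T y N (d j).m ∩ Set.Ici nj).ncard : ℕ) : ℝ)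
            ≤ ((U ∩ Set.Icc 1 (Nm-1)).ncard : ℝ) := by
          have := Set.ncard_le_ncard hB ((Set.finite_Icc 1 (Nm-1)).subset
            Set.inter_subset_right)
          exact_mod_cast this
        have hcard2 : ((BS T y N (d j).m).ncard : ℝ)
            ≤ ((BS T y N (d j).m ∩ Set.Ici nj).ncard : ℝ) + nj := by
          apply ncard_le_ncard_add_of_subset_union_Iio _ hfinB
          intro i hi
          rcases le_or_gt nj i with h2 | h2
          · exact Or.inl ⟨hi, h2⟩
          · exact Or.inr h2
        have hS := qS j
        have hNr : ((j:ℝ)+1) * ((nj : ℝ) + 1) ≤ (Nm : ℝ) := by exact_mod_cast qN j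
        have hj1 : (1:ℝ) ≤ (j:ℝ) := by exact_mod_cast hj
        have hδpos : (0:ℝ) < 1/((j:ℝ)+1) := by positivity
        have hδ1 : (1:ℝ)/((j:ℝ)+1) ≤ 1 := by
          rw [div_le_one (by linarith)]; linarith
        have hδj : (1/((j:ℝ)+1)) * ((j:ℝ)+1) = 1 := by field_simp
        have hd1 : ((nj:ℝ) + 1) ≤ (1/((j:ℝ)+1)) * Nm := by nlinarith
        have hNm4 : (4:ℝ) ≤ (Nm:ℝ) := by
          have h2 : (1:ℝ) ≤ (nj:ℝ) := by exact_mod_cast qn1 j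
          nlinarith
        have hNmcast : ((Nm - 1 : ℕ) : ℝ) = (Nm : ℝ) - 1 := by
          have : 1 ≤ Nm := hN1 _
          push_cast [this]
          ring
        rw [hNmcast, le_div_iff₀ (by linarith)]
        have e1 : (1 - 2/((j:ℝ)+1)) * ((Nm:ℝ) - 1)
            = (Nm:ℝ) - 1 - 2*((1/((j:ℝ)+1))*Nm) + 2*(1/((j:ℝ)+1)) := by ring
        have e2 : (1 - 1/((j:ℝ)+1)) * (Nm:ℝ) = (Nm:ℝ) - (1/((j:ℝ)+1))*Nm := by ring
        rw [e1]
        rw [e2] at hS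
        linarith
  -- density of Z
  have hZden : upperDensity Z = 1 := by
    apply upperDensity_eq_one_of_seq (fun j => (d j).K)
    · exact tendsto_atTop_mono (fun j => hKmono.le_apply) tendsto_id
    · intro j
      have hM1 : 1 ≤ (d j).M := le_trans (qn1 j) (qnM j)
      have hsub : Set.Icc ((d j).M) ((d j).K) ⊆ Z ∩ Set.Icc 1 ((d j).K) := by
        intro i hi
        refine ⟨by rw [hZ, Set.mem_iUnion]; exact ⟨j, hi⟩, le_trans hM1 hi.1, hi.2⟩
      have hcard1 : ((Set.Icc ((d j).M) ((d j).K)).ncard : ℝ)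
          ≤ ((Z ∩ Set.Icc 1 ((d j).K)).ncard : ℝ) := by
        have := Set.ncard_le_ncard hsub ((Set.finite_Icc 1 _).subset Set.inter_subset_right)
        exact_mod_cast this
      have hcard2 : ((Set.Icc ((d j).M) ((d j).K)).ncard : ℝ)
          = ((d j).K : ℝ) - (d j).M + 1 := by
        rw [← Finset.coe_Icc, Set.ncard_coe_finset, Nat.card_Icc]
        have h := hMK j
        rw [Nat.cast_sub (by omega : (d j).M ≤ (d j).K + 1)]
        push_cast
        ring
      have hK1 : (1:ℝ) ≤ ((d j).K : ℝ) := by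
        exact_mod_cast le_trans hM1 (hMK j)
      rw [le_div_iff₀ (by linarith)]
      have hδj : (1/((j:ℝ)+1)) * ((j:ℝ)+1) = 1 := by field_simp
      have hδK : (1/((j:ℝ)+1)) * ((d j).K : ℝ) = ((d j).M : ℝ) := by
        rw [qK j]
        push_cast
        field_simp
      have hM0 : (0:ℝ) ≤ ((d j).M : ℝ) := Nat.cast_nonneg _
      have e1 : (1 - 2/((j:ℝ)+1)) * ((d j).K : ℝ)
          = ((d j).K : ℝ) - 2*((1/((j:ℝ)+1)) * ((d j).K : ℝ)) := by ring
      rw [e1, hδK]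
      linarith
  -- assemble the distributionally irregular vector
  have hZinf' : (setOf (· ∈ Z)).Infinite := by
    assumption
  have hUinf' : (setOf (· ∈ U)).Infinite := by
    assumption
  refine ⟨x, Nat.nth (· ∈ Z), Nat.nth (· ∈ U),
    Nat.nth_strictMono hZinf', Nat.nth_strictMono hUinf', ?_, ?_, ?_, ?_, ?_, ?_⟩
  · exact fun k => hZ1 _ (Nat.nth_mem_of_infinite hZinf' k)
  · exact fun k => hU1 _ (Nat.nth_mem_of_infinite hUinf' k)
  · rw [Nat.range_nth_of_infinite hZinf', Set.setOf_mem_eq]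
    exact hZden
  · rw [Nat.range_nth_of_infinite hUinf', Set.setOf_mem_eq]
    exact hUden
  · -- tendsto zero along Z
    rw [Metric.tendsto_atTop]
    intro ε hε
    obtain ⟨J, hJ⟩ : ∃ J : ℕ, ((1:ℝ)/2)^J < ε/2 :=
      exists_pow_lt_of_lt_one (by positivity) (by norm_num)
    refine ⟨(d J).M, fun k hk => ?_⟩
    have h1 : (d J).M ≤ Nat.nth (· ∈ Z) k :=
      le_trans hk (Nat.nth_strictMono hZinf').le_apply
    have h2 := hZsmall J _ (Nat.nth_mem_of_infinite hZinf' k) h1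
    rw [Real.dist_eq, sub_zero, abs_of_nonneg (norm_nonneg _)]
    linarith
  · -- tendsto atTop along U
    rw [Filter.tendsto_atTop]
    intro R
    rw [Filter.eventually_atTop]
    refine ⟨(d ⌈R⌉₊).n, fun k hk => ?_⟩
    have h1 : (d ⌈R⌉₊).n ≤ Nat.nth (· ∈ U) k :=
      le_trans hk (Nat.nth_strictMono hUinf').le_apply
    have h2 := hUlarge ⌈R⌉₊ _ (Nat.nth_mem_of_infinite hUinf' k) h1
    have h3 : R ≤ (⌈R⌉₊ : ℝ) := Nat.le_ceil R
    linarith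

end BMain2

/-- For operators whose orbits tend to zero on a dense set, the DCC is equivalent to the
existence of a distributionally irregular vector, and to condition (iii). -/
theorem DCC_iff_distIrregularVector_of_denseOrbitsToZero
    {𝕜 : Type*} [RCLike 𝕜] {X : Type*} [NormedAddCommGroup X] [NormedSpace 𝕜 X]
    [CompleteSpace X] (T : X →L[𝕜] X) (D : Set X) (hD : Dense D)
    (hD0 : ∀ x ∈ D, Filter.Tendsto (fun n : ℕ => (T ^ n) x) Filter.atTop (nhds 0)) :
    (DCCriterion T ↔ ∃ x : X, DistIrregularVector T x) ∧
    (DCCriterion T ↔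
      ∃ y : ℕ → X, (∀ m, y m ≠ 0) ∧
        ∃ N : ℕ → ℕ, (∀ m, 0 < N m) ∧ Monotone N ∧
          Filter.Tendsto N Filter.atTop Filter.atTop ∧
          Filter.Tendsto (fun m : ℕ =>
              (({i : ℕ | i < N m ∧ (m : ℝ) * ‖y m‖ ≤ ‖(T ^ i) (y m)‖}).ncard : ℝ) / N m)
            Filter.atTop (nhds 1)) := by
  constructor
  · constructor
    · intro h
      obtain ⟨xs, ys, Ns, hx0, hy0, hycl, hxT, hN1, hNmono, hNtop, hrat⟩ := h
      exact cond3_to_distIrr T D hD hD0 ys Ns hy0 hN1 hNtop hrat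
    · rintro ⟨x, hx⟩
      exact distIrr_to_DCC T D hD hD0 x hx
  · constructor
    · intro h
      obtain ⟨xs, ys, Ns, hx0, hy0, hycl, hxT, hN1, hNmono, hNtop, hrat⟩ := h
      exact ⟨ys, hy0, Ns, hN1, hNmono, hNtop, hrat⟩
    · rintro ⟨ys, hy0, Ns, hN1, hNmono, hNtop, hrat⟩
      obtain ⟨x, hx⟩ := cond3_to_distIrr T D hD hD0 ys Ns hy0 hN1 hNtop hrat
      exact distIrr_to_DCC T D hD hD0 x hx
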